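/- If an r-uniform hypergraph H has an edge e containing exactly two non-leaf vertices u, v such that H−e is disconnected (a 2-bridge), and the contraction H/e (delete e, identify u and v) satisfies ρ(H/e) > (r−1)!·4^{1/r}, then ρ(H) > (r−1)!·4^{1/r}. -/

import Mathlib

open Finset

/-- Spectral radius of an `r`-uniform hypergraph with edge set `E`. -/
noncomputable def specRad (r : ℕ) {V : Type} [Fintype V] (E : Finset (Finset V)) : ℝ :=
  sSup {ρ : ℝ | ∃ x : V → ℝ, (∀ v, 0 ≤ x v) ∧ x ≠ 0 ∧
    ρ = (Nat.factorial r : ℝ) * (∑ e ∈ E, ∏ v ∈ e, x v) / (∑ v, x v ^ r)}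

lemma rayleigh_le {V : Type} [Fintype V] (r : ℕ) (hr : 1 ≤ r) (E : Finset (Finset V))
    (hunif : ∀ f ∈ E, f.card = r) (x : V → ℝ) (hx : ∀ v, 0 ≤ x v) (hx0 : x ≠ 0) :
    (Nat.factorial r : ℝ) * (∑ e ∈ E, ∏ v ∈ e, x v) / (∑ v, x v ^ r)
      ≤ (Nat.factorial r : ℝ) * E.card := by
  obtain ⟨w, hw⟩ : ∃ w, x w ≠ 0 := by
    by_contra h; push_neg at h; exact hx0 (funext h)
  have hV : (Finset.univ : Finset V).Nonempty := ⟨w, mem_univ w⟩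
  obtain ⟨m, -, hm⟩ := Finset.exists_max_image univ x hV
  have hMpos : 0 < x m := lt_of_lt_of_le ((hx w).lt_of_ne (Ne.symm hw)) (hm w (mem_univ w))
  have hden : (0:ℝ) < ∑ v, x v ^ r := by
    refine lt_of_lt_of_le (pow_pos hMpos r) ?_
    exact Finset.single_le_sum (fun v _ => pow_nonneg (hx v) r) (mem_univ m)
  have hnum : (∑ e ∈ E, ∏ v ∈ e, x v) ≤ E.card * x m ^ r := by
    calc (∑ e ∈ E, ∏ v ∈ e, x v) ≤ ∑ e ∈ E, x m ^ r := by
          refine Finset.sum_le_sum fun f hf => ?_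
          calc ∏ v ∈ f, x v ≤ ∏ v ∈ f, x m :=
                Finset.prod_le_prod (fun v _ => hx v) (fun v _ => hm v (mem_univ v))
            _ = x m ^ r := by rw [Finset.prod_const, hunif f hf]
      _ = E.card * x m ^ r := by rw [Finset.sum_const, nsmul_eq_mul]
  rw [div_le_iff₀ hden, mul_assoc]
  have hfac : (0:ℝ) ≤ (Nat.factorial r : ℝ) := by positivity
  refine mul_le_mul_of_nonneg_left ?_ hfac
  calc (∑ e ∈ E, ∏ v ∈ e, x v) ≤ E.card * x m ^ r := hnum
    _ ≤ (E.card:ℝ) * ∑ v, x v ^ r := by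
        refine mul_le_mul_of_nonneg_left ?_ (by positivity : (0:ℝ) ≤ (E.card:ℝ))
        exact Finset.single_le_sum (fun v _ => pow_nonneg (hx v) r) (mem_univ m)

/-- Two vertices are adjacent if some edge contains both. -/
def Step {V : Type} (E : Finset (Finset V)) (a b : V) : Prop := ∃ e ∈ E, a ∈ e ∧ b ∈ e

/-- if `e` is a 2-bridge of `H` with non-leaf vertices `u₀, v₀`
(all other vertices of `e` are leaves and `H − e` does not connect `u₀` to `v₀`),
and the contraction `H/e` (delete `e`, identify `v₀` with `u₀`) has spectral radius
greater than `(r−1)!·4^{1/r}`, then so does `H`. -/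

lemma lt_specRad {V : Type} [Fintype V] (r : ℕ) (hr : 1 ≤ r) (E : Finset (Finset V))
    (hunif : ∀ f ∈ E, f.card = r) (c : ℝ) (x : V → ℝ) (hx : ∀ v, 0 ≤ x v) (hx0 : x ≠ 0)
    (h : c < (Nat.factorial r : ℝ) * (∑ e ∈ E, ∏ v ∈ e, x v) / (∑ v, x v ^ r)) :
    c < specRad r E := by
  refine lt_of_lt_of_le h (le_csSup ?_ ⟨x, hx, hx0, rfl⟩)
  exact ⟨(Nat.factorial r : ℝ) * E.card, fun ρ hρ => by
    obtain ⟨y, hy, hy0, rfl⟩ := hρ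
    exact rayleigh_le r hr E hunif y hy hy0⟩

lemma exists_witness {V : Type} [Fintype V] (r : ℕ) (E : Finset (Finset V)) (c : ℝ)
    (hc : 0 ≤ c) (h : c < specRad r E) :
    ∃ x : V → ℝ, (∀ v, 0 ≤ x v) ∧ x ≠ 0 ∧
      c < (Nat.factorial r : ℝ) * (∑ e ∈ E, ∏ v ∈ e, x v) / (∑ v, x v ^ r) := by
  by_contra hcon
  push_neg at hcon
  refine absurd h (not_lt.2 (Real.sSup_le ?_ hc))
  rintro ρ ⟨x, hx, hx0, rfl⟩
  exact hcon x hx hx0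

lemma sum_pow_pos {V : Type} [Fintype V] (r : ℕ) (x : V → ℝ) (hx : ∀ v, 0 ≤ x v)
    (hx0 : x ≠ 0) : 0 < ∑ v, x v ^ r := by
  obtain ⟨w, hw⟩ : ∃ w, x w ≠ 0 := by
    by_contra h; push_neg at h; exact hx0 (funext h)
  refine lt_of_lt_of_le (pow_pos ((hx w).lt_of_ne (Ne.symm hw)) r) ?_
  exact Finset.single_le_sum (fun v _ => pow_nonneg (hx v) r) (mem_univ w)

theorem specRad_gt_of_contraction_gt {V : Type} [Fintype V] [DecidableEq V]
    (r : ℕ) (hr : 2 ≤ r) (E : Finset (Finset V)) (hunif : ∀ f ∈ E, f.card = r)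
    (e : Finset V) (he : e ∈ E) (u₀ v₀ : V) (hu : u₀ ∈ e) (hv : v₀ ∈ e)
    (hne : u₀ ≠ v₀)
    (hdu : 2 ≤ (E.filter (fun f => u₀ ∈ f)).card)
    (hdv : 2 ≤ (E.filter (fun f => v₀ ∈ f)).card)
    (hleaf : ∀ w ∈ e, w ≠ u₀ → w ≠ v₀ → (E.filter (fun f => w ∈ f)).card = 1)
    (hbridge : ¬ Relation.ReflTransGen (Step (E.erase e)) u₀ v₀)
    (hcontr : (Nat.factorial (r - 1) : ℝ) * (4 : ℝ) ^ ((1 : ℝ) / r) <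
      specRad r ((E.erase e).image
        (fun f => f.image (fun x => if x = v₀ then u₀ else x)))) :
    (Nat.factorial (r - 1) : ℝ) * (4 : ℝ) ^ ((1 : ℝ) / r) < specRad r E := by
  classical
  set c : ℝ := (Nat.factorial (r - 1) : ℝ) * (4 : ℝ) ^ ((1 : ℝ) / r) with hc
  have hc0 : 0 < c := by positivity
  set m : V → V := fun x => if x = v₀ then u₀ else x with hmdef
  set E' : Finset (Finset V) := (E.erase e).image (fun f => f.image m) with hE'
  have hrR : (0:ℝ) < (r:ℝ) := by positivity
  -- basic structural facts
  have hstep : ∀ f ∈ E.erase e, ¬(u₀ ∈ f ∧ v₀ ∈ f) := by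
    rintro f hf ⟨h1, h2⟩
    exact hbridge (Relation.ReflTransGen.single ⟨f, hf, h1, h2⟩)
  have hleaf' : ∀ w ∈ e, w ≠ u₀ → w ≠ v₀ → ∀ f ∈ E.erase e, w ∉ f := by
    intro w hw hwu hwv f hf hwf
    have hfe : f ≠ e := Finset.ne_of_mem_erase hf
    have hsub : ({e, f} : Finset (Finset V)) ⊆ E.filter (fun g => w ∈ g) := by
      intro g hg
      rcases Finset.mem_insert.1 hg with rfl | hg
      · exact Finset.mem_filter.2 ⟨he, hw⟩
      · rw [Finset.mem_singleton] at hg; subst hg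
        exact Finset.mem_filter.2 ⟨Finset.mem_of_mem_erase hf, hwf⟩
    have h2 : 2 ≤ (E.filter (fun g => w ∈ g)).card := by
      have := Finset.card_le_card hsub
      rwa [Finset.card_pair (Ne.symm hfe)] at this
    rw [hleaf w hw hwu hwv] at h2; omega
  have hmv : ∀ w : V, m w ≠ v₀ := by
    intro w hw
    by_cases h : w = v₀
    · rw [h] at hw; simp only [m, if_pos rfl] at hw; exact hne hw
    · simp only [m, if_neg h] at hw; exact h hw
  have hv₀notim : ∀ f : Finset V, v₀ ∉ f.image m := by
    intro f hf
    obtain ⟨w, -, hw⟩ := Finset.mem_image.1 hf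
    exact hmv w hw
  have hminj : ∀ f ∈ E.erase e, Set.InjOn m f := by
    intro f hf a ha b hb hab
    by_cases hav : a = v₀
    · by_cases hbv : b = v₀
      · rw [hav, hbv]
      · subst hav
        simp only [m, if_pos rfl, if_neg hbv] at hab
        exact absurd ⟨hab ▸ hb, ha⟩ (hstep f hf)
    · by_cases hbv : b = v₀
      · subst hbv
        simp only [m, if_pos rfl, if_neg hav] at hab
        exact absurd ⟨hab.symm ▸ ha, hb⟩ (hstep f hf)
      · simpa only [m, if_neg hav, if_neg hbv] using hab
  have hmem_image : ∀ (f : Finset V), ∀ w ∈ f, w ≠ v₀ → w ∈ f.image m := by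
    intro f w hw hwv
    exact Finset.mem_image.2 ⟨w, hw, by simp only [m, if_neg hwv]⟩
  -- transfer: if images agree, non-v₀ elements transfer (or are u₀ with v₀ on other side)
  have htrans : ∀ p q : Finset V, p.image m = q.image m → ∀ z ∈ p, z ≠ v₀ →
      z ∈ q ∨ (z = u₀ ∧ v₀ ∈ q) := by
    intro p q hpq z hz hzv
    have : z ∈ q.image m := hpq ▸ hmem_image p z hz hzv
    obtain ⟨w', hw', hw'm⟩ := Finset.mem_image.1 this
    by_cases hw'v : w' = v₀
    · subst hw'v
      simp only [m, if_pos rfl] at hw'm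
      exact Or.inr ⟨hw'm.symm, hw'⟩
    · simp only [m, if_neg hw'v] at hw'm
      exact Or.inl (hw'm ▸ hw')
  have hu₀trans : ∀ p q : Finset V, p.image m = q.image m → v₀ ∈ p →
      u₀ ∈ q ∨ v₀ ∈ q := by
    intro p q hpq hvp
    have : u₀ ∈ q.image m := hpq ▸ Finset.mem_image.2 ⟨v₀, hvp, by simp only [m, if_pos rfl]⟩
    obtain ⟨w', hw', hw'm⟩ := Finset.mem_image.1 this
    by_cases hw'v : w' = v₀
    · exact Or.inr (hw'v ▸ hw')
    · simp only [m, if_neg hw'v] at hw'm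
      exact Or.inl (hw'm ▸ hw')
  have hcard2 : ∀ f ∈ E.erase e, 1 < f.card := by
    intro f hf
    rw [hunif f (Finset.mem_of_mem_erase hf)]; omega
  have himinj : Set.InjOn (fun f => Finset.image m f) (E.erase e) := by
    have key : ∀ p ∈ E.erase e, ∀ q ∈ E.erase e, p.image m = q.image m → p ⊆ q := by
      intro p hp q hq hpq w hw
      by_cases hwv : w = v₀
      · rw [hwv] at hw ⊢
        by_contra hvq
        have hu₀q : u₀ ∈ q := (hu₀trans p q hpq hw).resolve_right hvq
        have hu₀p : u₀ ∉ p := fun h => hstep p hp ⟨h, hw⟩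
        obtain ⟨z, hz, hzv⟩ := Finset.exists_mem_ne (hcard2 p hp) v₀
        have hzq : z ∈ q := by
          rcases htrans p q hpq z hz hzv with h | ⟨hzu, -⟩
          · exact h
          · exact absurd (hzu ▸ hz) hu₀p
        exact hbridge (Relation.ReflTransGen.head ⟨q, hq, hu₀q, hzq⟩
          (Relation.ReflTransGen.single ⟨p, hp, hz, hw⟩))
      · rcases htrans p q hpq w hw hwv with h | ⟨hwu, hvq⟩
        · exact h
        · -- u₀ ∈ p, v₀ ∈ q : derive contradiction
          exfalso
          have hwp : u₀ ∈ p := hwu ▸ hw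
          have hu₀q : u₀ ∉ q := fun h => hstep q hq ⟨h, hvq⟩
          obtain ⟨z, hz, hzv⟩ := Finset.exists_mem_ne (hcard2 q hq) v₀
          have hzp : z ∈ p := by
            rcases htrans q p hpq.symm z hz hzv with h | ⟨hzu, -⟩
            · exact h
            · exact absurd (hzu ▸ hz) hu₀q
          exact hbridge (Relation.ReflTransGen.head ⟨p, hp, hwp, hzp⟩
            (Relation.ReflTransGen.single ⟨q, hq, hz, hvq⟩))
    intro f hf g hg hfg
    exact Finset.Subset.antisymm (key f hf g hg hfg) (key g hg f hf hfg.symm)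
  -- witness for the contraction
  obtain ⟨x, hx, hx0, hρ⟩ := exists_witness r E' c hc0.le hcontr
  set a : ℝ := x u₀ with ha
  set t : ℝ := (2:ℝ) ^ (-(1:ℝ)/(r:ℝ)) with htdef
  have ht0 : 0 < t := Real.rpow_pos_of_pos two_pos _
  have htr : t ^ r = 1/2 := by
    rw [htdef, ← Real.rpow_natCast ((2:ℝ) ^ (-(1:ℝ)/(r:ℝ))) r, ← Real.rpow_mul (by norm_num)]
    rw [show (-(1:ℝ)/(r:ℝ)) * (r:ℝ) = -1 by field_simp]
    rw [Real.rpow_neg_one]; norm_num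
  have ht4 : t ^ (r-2) = (4:ℝ) ^ ((1:ℝ)/(r:ℝ)) / 2 := by
    rw [htdef, ← Real.rpow_natCast ((2:ℝ) ^ (-(1:ℝ)/(r:ℝ))) (r-2), ← Real.rpow_mul (by norm_num)]
    have hcast : ((r-2:ℕ):ℝ) = (r:ℝ) - 2 := by
      push_cast [Nat.cast_sub hr]; ring
    rw [hcast]
    have h4 : (4:ℝ) = (2:ℝ) ^ (2:ℝ) := by
      rw [show (2:ℝ) = ((2:ℕ):ℝ) by norm_num, Real.rpow_natCast]; norm_num
    rw [h4, ← Real.rpow_mul (by norm_num), show (2:ℝ) * ((1:ℝ)/(r:ℝ)) = 2/(r:ℝ) by ring]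
    rw [show ((2:ℝ)^((2:ℝ)/(r:ℝ)))/2 = (2:ℝ)^((2:ℝ)/(r:ℝ)) / (2:ℝ)^(1:ℝ) by norm_num]
    rw [← Real.rpow_sub (by norm_num)]
    congr 1
    field_simp
    ring
  set y : V → ℝ := fun v => if v = v₀ then a else if v ∈ e ∧ v ≠ u₀ then a * t else x v with hy
  have hynn : ∀ v, 0 ≤ y v := by
    intro v; simp only [hy]; split_ifs
    · exact hx u₀
    · exact mul_nonneg (hx u₀) ht0.le
    · exact hx v
  have hyu : y u₀ = a := by simp only [hy, if_neg hne]; rw [if_neg (by simp)]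
  have hyv : y v₀ = a := by simp only [hy, if_pos rfl]
  have hyleafval : ∀ w ∈ e, w ≠ u₀ → w ≠ v₀ → y w = a * t := by
    intro w hw hwu hwv
    simp only [hy]; rw [if_neg hwv, if_pos ⟨hw, hwu⟩]
  have hyeq : ∀ z : V, z ≠ v₀ → ¬(z ∈ e ∧ z ≠ u₀) → y z = x z := by
    intro z h1 h2; simp only [hy]; rw [if_neg h1, if_neg h2]
  have hnotleafmem : ∀ z : V, ∀ f ∈ E.erase e, z ∈ f.image m →
      z ≠ v₀ ∧ ¬(z ∈ e ∧ z ≠ u₀) := by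
    intro z f hf hz
    have hzv : z ≠ v₀ := fun h => hv₀notim f (h ▸ hz)
    refine ⟨hzv, ?_⟩
    rintro ⟨hze, hzu⟩
    obtain ⟨w, hw, hwm⟩ := Finset.mem_image.1 hz
    by_cases hwv : w = v₀
    · rw [hwv] at hwm; simp only [m, if_pos rfl] at hwm; exact hzu hwm.symm
    · simp only [m, if_neg hwv] at hwm
      exact hleaf' z hze hzu hzv f hf (hwm ▸ hw)
  have hprod : ∀ f ∈ E.erase e, ∏ v ∈ f, y v = ∏ v ∈ f.image m, x v := by
    intro f hf
    rw [Finset.prod_image (fun p hp q hq h => hminj f hf hp hq h)]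
    refine Finset.prod_congr rfl fun v hvf => ?_
    by_cases hvv : v = v₀
    · rw [hvv, hyv]; simp only [m, if_pos rfl]; exact ha
    · have h2 := (hnotleafmem v f hf (hmem_image f v hvf hvv)).2
      simp only [m, if_neg hvv]
      exact hyeq v hvv h2
  have hsum : ∑ f ∈ E.erase e, ∏ v ∈ f, y v = ∑ f' ∈ E', ∏ v ∈ f', x v := by
    rw [hE', Finset.sum_image (fun p hp q hq h => himinj hp hq h)]
    exact Finset.sum_congr rfl hprod
  -- product over the edge e
  have hvT : v₀ ∈ e.erase u₀ := Finset.mem_erase.2 ⟨Ne.symm hne, hv⟩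
  have hLcard : ((e.erase u₀).erase v₀).card = r - 2 := by
    rw [Finset.card_erase_of_mem hvT, Finset.card_erase_of_mem hu, hunif e he]
    omega
  have hLval : ∀ w ∈ (e.erase u₀).erase v₀, y w = a * t := by
    intro w hw
    obtain ⟨hwv, hw'⟩ := Finset.mem_erase.1 hw
    obtain ⟨hwu, hwe⟩ := Finset.mem_erase.1 hw'
    exact hyleafval w hwe hwu hwv
  have hprode : ∏ v ∈ e, y v = a * (a * (a*t)^(r-2)) := by
    rw [← Finset.mul_prod_erase e y hu, hyu]
    congr 1
    rw [← Finset.mul_prod_erase _ y hvT, hyv]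
    congr 1
    rw [Finset.prod_congr rfl hLval, Finset.prod_const, hLcard]
  -- denominator
  have hdenY : ∑ v, y v ^ r
      = (∑ v ∈ univ \ e.erase u₀, x v ^ r) + (a^r + ((r:ℝ)-2)*(a*t)^r) := by
    rw [← Finset.sum_sdiff (Finset.subset_univ (e.erase u₀))]
    congr 1
    · refine Finset.sum_congr rfl fun v hv' => ?_
      obtain ⟨-, hvT'⟩ := Finset.mem_sdiff.1 hv'
      have h1 : v ≠ v₀ := fun h => hvT' (h ▸ hvT)
      have h2 : ¬(v ∈ e ∧ v ≠ u₀) := fun ⟨hva, hvb⟩ => hvT' (Finset.mem_erase.2 ⟨hvb, hva⟩)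
      rw [hyeq v h1 h2]
    · rw [← Finset.add_sum_erase _ _ hvT, hyv,
        Finset.sum_congr rfl (fun w hw => by rw [hLval w hw]), Finset.sum_const, hLcard,
        nsmul_eq_mul]
      congr 2
      push_cast [Nat.cast_sub hr]
      ring
  -- positivity facts
  have hD : 0 < ∑ v, x v ^ r := sum_pow_pos r x hx hx0
  have hN' : 0 < ∑ f' ∈ E', ∏ v ∈ f', x v := by
    by_contra h
    push_neg at h
    have hle : (Nat.factorial r : ℝ) * (∑ f' ∈ E', ∏ v ∈ f', x v) / (∑ v, x v ^ r) ≤ 0 :=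
      div_nonpos_of_nonpos_of_nonneg (mul_nonpos_of_nonneg_of_nonpos (by positivity) h) hD.le
    linarith
  obtain ⟨f₁, hf₁, hf₁pos⟩ : ∃ f' ∈ E', 0 < ∏ v ∈ f', x v := by
    by_contra h
    push_neg at h
    have : ∑ f' ∈ E', ∏ v ∈ f', x v ≤ 0 := Finset.sum_nonpos h
    linarith
  have hy0 : y ≠ 0 := by
    obtain ⟨f, hf, hfim⟩ := Finset.mem_image.1 (hE' ▸ hf₁)
    have hfne : (f.image m).Nonempty := by
      refine Finset.image_nonempty.2 (Finset.card_pos.1 ?_)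
      rw [hunif f (Finset.mem_of_mem_erase hf)]; omega
    obtain ⟨z, hz⟩ := hfne
    rw [← hfim] at hf₁pos
    have hxz : 0 < x z := by
      rcases (hx z).lt_or_eq with h | h
      · exact h
      · exact absurd (Finset.prod_eq_zero hz h.symm) hf₁pos.ne'
    obtain ⟨h1, h2⟩ := hnotleafmem z f hf hz
    intro h0
    have : y z = 0 := by rw [h0]; rfl
    rw [hyeq z h1 h2] at this
    exact hxz.ne' this
  -- key arithmetic identity
  obtain ⟨sr, hsr⟩ : ∃ s, r = s + 1 := ⟨r-1, by omega⟩
  have hfact : (Nat.factorial r : ℝ) = (r:ℝ) * (Nat.factorial (r-1) : ℝ) := by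
    rw [hsr, Nat.factorial_succ, show sr + 1 - 1 = sr from rfl]
    push_cast; ring
  have hkey : (Nat.factorial r : ℝ) * (a * (a * (a*t)^(r-2)))
      = c * (a^r + ((r:ℝ)-2)*(a*t)^r) := by
    have h2 : a * (a * ((a*t)^(r-2))) = a ^ r * t^(r-2) := by
      rw [mul_pow]
      calc a * (a * (a^(r-2) * t^(r-2))) = (a^2 * a^(r-2)) * t^(r-2) := by ring
        _ = a^r * t^(r-2) := by rw [← pow_add, show 2 + (r-2) = r by omega]
    rw [h2, mul_pow a t r, htr, ht4, hfact, hc]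
    ring
  -- assembly
  refine lt_specRad r (by omega) E hunif c y hynn hy0 ?_
  have hDY : 0 < ∑ v, y v ^ r := sum_pow_pos r y hynn hy0
  rw [lt_div_iff₀ hDY]
  have hsplit : ∑ f ∈ E, ∏ v ∈ f, y v
      = (∏ v ∈ e, y v) + ∑ f ∈ E.erase e, ∏ v ∈ f, y v := (Finset.add_sum_erase E _ he).symm
  have hS0 : ∑ v ∈ univ \ e.erase u₀, x v ^ r ≤ ∑ v, x v ^ r :=
    Finset.sum_le_sum_of_subset_of_nonneg (Finset.sdiff_subset)
      (fun v _ _ => pow_nonneg (hx v) r)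
  have hcD : c * (∑ v, x v ^ r) < (Nat.factorial r : ℝ) * (∑ f' ∈ E', ∏ v ∈ f', x v) :=
    (lt_div_iff₀ hD).1 hρ
  calc c * ∑ v, y v ^ r
      = c * (∑ v ∈ univ \ e.erase u₀, x v ^ r) + c * (a^r + ((r:ℝ)-2)*(a*t)^r) := by
        rw [hdenY]; ring
    _ ≤ c * (∑ v, x v ^ r) + c * (a^r + ((r:ℝ)-2)*(a*t)^r) := by
        have := mul_le_mul_of_nonneg_left hS0 hc0.le
        linarith
    _ < (Nat.factorial r : ℝ) * (∑ f' ∈ E', ∏ v ∈ f', x v)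
          + c * (a^r + ((r:ℝ)-2)*(a*t)^r) := by linarith
    _ = (Nat.factorial r : ℝ) * (∑ f ∈ E, ∏ v ∈ f, y v) := by
        conv_rhs => rw [hsplit, hprode, mul_add, hkey, hsum]
        ring
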